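/- Let u be a bounded C² solution of κ²u'' + u - u³ = 0 on ℝ, and let C be the constant value of κ²(u')² + u² - u⁴/2. Then C ≤ 1/2; i.e., if C > 1/2 no bounded solution exists. -/

import Mathlib

/-- A differentiable function with derivative bounded below by a positive
constant is unbounded. -/
lemma unbounded_of_deriv_ge (c : ℝ) (hc : 0 < c) (f : ℝ → ℝ)
    (hf : Differentiable ℝ f) (hd : ∀ x, c ≤ deriv f x)
    (M : ℝ) (hM : ∀ x, |f x| ≤ M) : False := by
  have hdiff : Differentiable ℝ (fun x => f x - c * x) :=
    hf.sub (differentiable_id.const_mul c)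
  have hg : Monotone (fun x => f x - c * x) := by
    apply monotone_of_deriv_nonneg hdiff
    intro x
    have h1 : deriv (fun x => f x - c * x) x = deriv f x - c := by
      have := (hf x).hasDerivAt.sub (((hasDerivAt_id x).const_mul c))
      exact this.deriv.trans (by ring)
    rw [h1]
    linarith [hd x]
  set x₀ : ℝ := (|M| + |f 0| + 1) / c with hx₀
  have hx₀pos : 0 < x₀ := by positivity
  have h2 : f 0 - c * 0 ≤ f x₀ - c * x₀ := hg hx₀pos.le
  have h3 : c * x₀ = |M| + |f 0| + 1 := by
    rw [hx₀]; field_simp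
  have h4 := hM x₀
  have h5 := abs_le.mp h4
  have h6 : -|f 0| ≤ f 0 := neg_abs_le _
  have h7 : M ≤ |M| := le_abs_self M
  linarith [h2, h5.2]

/-- If `u` is a bounded C² solution of `κ²u'' + u - u³ = 0` on ℝ with conserved
constant `C = κ²(u')² + u² - u⁴/2`, then `C ≤ 1/2`. -/
theorem conserved_constant_le_half (κ C : ℝ) (hκ : 0 < κ) (u : ℝ → ℝ)
    (hu : ContDiff ℝ 2 u)
    (hbdd : ∃ M : ℝ, ∀ x : ℝ, |u x| ≤ M)
    (heq : ∀ x : ℝ, κ ^ 2 * deriv (deriv u) x + u x - (u x) ^ 3 = 0)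
    (hC : ∀ x : ℝ, κ ^ 2 * (deriv u x) ^ 2 + (u x) ^ 2 - (u x) ^ 4 / 2 = C) :
    C ≤ 1 / 2 := by
  by_contra h
  push_neg at h
  obtain ⟨M, hM⟩ := hbdd
  -- κ²(u')² ≥ C - 1/2 > 0 everywhere
  have key : ∀ x, C - 1/2 ≤ κ ^ 2 * (deriv u x) ^ 2 := by
    intro x
    have := hC x
    nlinarith [sq_nonneg ((u x)^2 - 1)]
  set c : ℝ := Real.sqrt (C - 1/2) / κ with hc
  have hcpos : 0 < c := by
    apply div_pos (Real.sqrt_pos.mpr (by linarith)) hκ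
  have hcsq : c ^ 2 = (C - 1/2) / κ ^ 2 := by
    rw [hc, div_pow, Real.sq_sqrt (by linarith : (0:ℝ) ≤ C - 1/2)]
  -- so c² ≤ (u')²
  have keyc : ∀ x, c ^ 2 ≤ (deriv u x) ^ 2 := by
    intro x
    rw [hcsq, div_le_iff₀ (by positivity)]
    nlinarith [key x]
  have hne : ∀ x, deriv u x ≠ 0 := by
    intro x hx
    have := keyc x
    rw [hx] at this
    nlinarith [hcpos]
  have hcont : Continuous (deriv u) := hu.continuous_deriv one_le_two
  have hdiff : Differentiable ℝ u := hu.differentiable (by norm_num)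
  -- deriv u has constant sign
  rcases lt_trichotomy (deriv u 0) 0 with h0 | h0 | h0
  · -- deriv u < 0 everywhere; apply to -u
    have hneg : ∀ x, deriv u x < 0 := by
      intro x
      by_contra hx
      push_neg at hx
      have hx' : 0 < deriv u x := lt_of_le_of_ne hx (Ne.symm (hne x))
      have : (0:ℝ) ∈ Set.Icc (deriv u 0) (deriv u x) := ⟨h0.le, hx'.le⟩
      obtain ⟨y, hy⟩ := intermediate_value_univ 0 x hcont this
      exact hne y hy
    refine unbounded_of_deriv_ge c hcpos (fun x => -u x) hdiff.neg ?_ M ?_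
    · intro x
      have : deriv (fun x => -u x) x = -deriv u x := deriv.neg
      rw [this]
      have h1 := keyc x
      have h2 := hneg x
      nlinarith
    · intro x
      rw [abs_neg]
      exact hM x
  · exact hne 0 h0
  · -- deriv u > 0 everywhere
    have hpos : ∀ x, 0 < deriv u x := by
      intro x
      by_contra hx
      push_neg at hx
      have hx' : deriv u x < 0 := lt_of_le_of_ne hx (hne x)
      have : (0:ℝ) ∈ Set.Icc (deriv u x) (deriv u 0) := ⟨hx'.le, h0.le⟩
      obtain ⟨y, hy⟩ := intermediate_value_univ x 0 hcont this
      exact hne y hy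
    refine unbounded_of_deriv_ge c hcpos u hdiff ?_ M hM
    intro x
    have h1 := keyc x
    have h2 := hpos x
    nlinarith
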